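/- Let N ≥ 2. An N×N Hermitian matrix X satisfies trace(ψ_{m,n} ψ_{m,n}* · X) = 0 for all m = 1,…,4 and n = 1,…,N−1 if and only if X[n,n] = 0 for all n = 1,…,N and X[1,n] = 0 (equivalently X[n,1] = 0) for all n = 1,…,N. (Lemma 4, part Ψ: characterization of the null space of the measurement map A_Ψ on Hermitian matrices.) -/
import Mathlib


open Complex Matrix MeasureTheory

noncomputable section

/-- α = √((1 − 1/√3)/2) -/
def alph : ℂ := (Real.sqrt ((1 - 1/Real.sqrt 3)/2) : ℝ)

/-- β = e^{i5π/4}·√((1 + 1/√3)/2) -/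
def beta : ℂ := Complex.exp (Complex.I * (5 * (Real.pi : ℂ) / 4)) *
  (Real.sqrt ((1 + 1/Real.sqrt 3)/2) : ℝ)

/-- the four frame vectors a₁ = (α,β), a₂ = (β,α), a₃ = (α,−β), a₄ = (−β,α) in ℂ² -/
def coef : Fin 4 → Fin 2 → ℂ := ![![alph, beta], ![beta, alph], ![alph, -beta], ![-beta, alph]]

/-- inner product ⟨x,y⟩ = Σ x[n]·conj(y[n]) -/
def inn {N : ℕ} (x y : Fin N → ℂ) : ℂ := ∑ i, x i * (starRingEnd ℂ) (y i)

/-- Euclidean norm ‖x‖ = √⟨x,x⟩ -/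
def nrm {N : ℕ} (x : Fin N → ℂ) : ℝ := Real.sqrt (inn x x).re

/-- outer product x y* -/
def outer {N : ℕ} (x y : Fin N → ℂ) : Matrix (Fin N) (Fin N) ℂ :=
  fun i j => x i * (starRingEnd ℂ) (y j)

/-- measurement vectors φ_{m,n} (0-based n: nonzero entries at positions n and n+1) -/
def phiv (N : ℕ) (m : Fin 4) (n : ℕ) : Fin N → ℂ :=
  fun i => if (i : ℕ) = n then coef m 0 else if (i : ℕ) = n + 1 then coef m 1 else 0

/-- measurement vectors ψ_{m,n} (0-based n: nonzero entries at positions 0 and n+1) -/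
def psiv (N : ℕ) (m : Fin 4) (n : ℕ) : Fin N → ℂ :=
  fun i => if (i : ℕ) = 0 then coef m 0 else if (i : ℕ) = n + 1 then coef m 1 else 0

/-- Hilbert–Schmidt inner product ⟨X,Y⟩ = trace(Y*X) -/
def hs {N : ℕ} (X Y : Matrix (Fin N) (Fin N) ℂ) : ℂ := Matrix.trace (Yᴴ * X)

/-- Frobenius (Hilbert–Schmidt) norm -/
def frob {N : ℕ} (X : Matrix (Fin N) (Fin N) ℂ) : ℝ := Real.sqrt (Matrix.trace (Xᴴ * X)).re

/-- spectral norm (largest singular value) -/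
def specNorm {N : ℕ} (A : Matrix (Fin N) (Fin N) ℂ) : ℝ :=
  sSup {r : ℝ | ∃ v : Fin N → ℂ, nrm v ≤ 1 ∧ r = nrm (A.mulVec v)}
lemma sqrt3_gt_one : (1:ℝ) < Real.sqrt 3 := by
  rw [show (1:ℝ) = Real.sqrt 1 by simp]
  exact Real.sqrt_lt_sqrt (by norm_num) (by norm_num)

lemma cos54 : Real.cos (5*Real.pi/4) = -(Real.sqrt 2/2) := by
  rw [show 5*Real.pi/4 = Real.pi/4 + Real.pi by ring, Real.cos_add_pi, Real.cos_pi_div_four]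

lemma sin54 : Real.sin (5*Real.pi/4) = -(Real.sqrt 2/2) := by
  rw [show 5*Real.pi/4 = Real.pi/4 + Real.pi by ring, Real.sin_add_pi, Real.sin_pi_div_four]

lemma beta_eq : beta = (↑(-(Real.sqrt 2/2) * Real.sqrt ((1+1/Real.sqrt 3)/2)) : ℂ) * (1 + Complex.I) := by
  rw [beta, show Complex.I * (5 * (Real.pi : ℂ) / 4) = ((5*Real.pi/4 : ℝ) : ℂ) * Complex.I by push_cast; ring,
    Complex.exp_mul_I, ← Complex.ofReal_cos, ← Complex.ofReal_sin, cos54, sin54]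
  push_cast
  ring

lemma a_nonneg_arg : (0:ℝ) ≤ (1 - 1/Real.sqrt 3)/2 := by
  have h := sqrt3_gt_one
  have : 1/Real.sqrt 3 < 1 := by
    rw [div_lt_one (by linarith)]; exact h
  linarith

lemma b_nonneg_arg : (0:ℝ) ≤ (1 + 1/Real.sqrt 3)/2 := by
  have h := sqrt3_gt_one
  have : 0 < 1/Real.sqrt 3 := by positivity
  linarith

lemma conj_alph : (starRingEnd ℂ) alph = alph := Complex.conj_ofReal _

lemma hA : alph * (starRingEnd ℂ) alph = (((1 - 1/Real.sqrt 3)/2 : ℝ) : ℂ) := by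
  rw [conj_alph, alph, ← Complex.ofReal_mul, Real.mul_self_sqrt a_nonneg_arg]


lemma conj_beta : (starRingEnd ℂ) beta =
    (↑(-(Real.sqrt 2/2) * Real.sqrt ((1+1/Real.sqrt 3)/2)) : ℂ) * (1 - Complex.I) := by
  rw [beta_eq]
  simp only [_root_.map_mul, map_add, _root_.map_one, Complex.conj_I, Complex.conj_ofReal]
  ring

lemma hI2 : ((1:ℂ)+Complex.I)*(1-Complex.I) = 2 := by linear_combination -Complex.I_sq

lemma hw : (-(Real.sqrt 2/2) * Real.sqrt ((1+1/Real.sqrt 3)/2)) * (-(Real.sqrt 2/2) * Real.sqrt ((1+1/Real.sqrt 3)/2)) = (1+1/Real.sqrt 3)/4 := by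
  have h2 : Real.sqrt 2 * Real.sqrt 2 = 2 := Real.mul_self_sqrt (by norm_num)
  have hb : Real.sqrt ((1+1/Real.sqrt 3)/2) * Real.sqrt ((1+1/Real.sqrt 3)/2) = (1+1/Real.sqrt 3)/2 := Real.mul_self_sqrt b_nonneg_arg
  calc (-(Real.sqrt 2/2) * Real.sqrt ((1+1/Real.sqrt 3)/2)) * (-(Real.sqrt 2/2) * Real.sqrt ((1+1/Real.sqrt 3)/2))
      = (Real.sqrt 2 * Real.sqrt 2) * (Real.sqrt ((1+1/Real.sqrt 3)/2) * Real.sqrt ((1+1/Real.sqrt 3)/2))/4 := by ring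
    _ = (1+1/Real.sqrt 3)/4 := by rw [h2, hb]; ring

lemma hB : beta * (starRingEnd ℂ) beta = (((1 + 1/Real.sqrt 3)/2 : ℝ) : ℂ) := by
  rw [conj_beta, beta_eq]
  calc (↑(-(Real.sqrt 2/2) * Real.sqrt ((1+1/Real.sqrt 3)/2)) : ℂ) * (1 + Complex.I) *
        ((↑(-(Real.sqrt 2/2) * Real.sqrt ((1+1/Real.sqrt 3)/2)) : ℂ) * (1 - Complex.I))
      = (↑((-(Real.sqrt 2/2) * Real.sqrt ((1+1/Real.sqrt 3)/2)) * (-(Real.sqrt 2/2) * Real.sqrt ((1+1/Real.sqrt 3)/2))) : ℂ) * ((1+Complex.I)*(1-Complex.I)) := by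
        push_cast; ring
    _ = (↑((1+1/Real.sqrt 3)/4 : ℝ) : ℂ) * 2 := by rw [hw, hI2]
    _ = (((1 + 1/Real.sqrt 3)/2 : ℝ) : ℂ) := by push_cast; ring

lemma hsum : alph * (starRingEnd ℂ) alph + beta * (starRingEnd ℂ) beta = 1 := by
  rw [hA, hB]; push_cast; ring

lemma inv_sqrt3_pos : (0:ℝ) < 1/Real.sqrt 3 := by
  have := sqrt3_gt_one; positivity

lemma hdiff_ne : alph * (starRingEnd ℂ) alph - beta * (starRingEnd ℂ) beta ≠ 0 := by
  rw [hA, hB, ← Complex.ofReal_sub]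
  rw [Complex.ofReal_ne_zero]
  have := inv_sqrt3_pos
  intro h; nlinarith

lemma a_pos : 0 < Real.sqrt ((1 - 1/Real.sqrt 3)/2) := by
  apply Real.sqrt_pos.mpr
  have h := sqrt3_gt_one
  have : 1/Real.sqrt 3 < 1 := by rw [div_lt_one (by linarith)]; exact h
  linarith

lemma w_neg : (-(Real.sqrt 2/2) * Real.sqrt ((1+1/Real.sqrt 3)/2)) < 0 := by
  have h2 : (0:ℝ) < Real.sqrt 2 := Real.sqrt_pos.mpr (by norm_num)
  have hb : (0:ℝ) < Real.sqrt ((1+1/Real.sqrt 3)/2) := Real.sqrt_pos.mpr (by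
    have := inv_sqrt3_pos; linarith)
  nlinarith

lemma c_eq : alph * (starRingEnd ℂ) beta =
    (↑(Real.sqrt ((1 - 1/Real.sqrt 3)/2) * (-(Real.sqrt 2/2) * Real.sqrt ((1+1/Real.sqrt 3)/2))) : ℂ) * (1 - Complex.I) := by
  rw [conj_beta, alph]; push_cast; ring

lemma cbar_eq : beta * (starRingEnd ℂ) alph =
    (↑(Real.sqrt ((1 - 1/Real.sqrt 3)/2) * (-(Real.sqrt 2/2) * Real.sqrt ((1+1/Real.sqrt 3)/2))) : ℂ) * (1 + Complex.I) := by
  rw [conj_alph, beta_eq, alph]; push_cast; ring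

lemma aw_ne : (Real.sqrt ((1 - 1/Real.sqrt 3)/2) * (-(Real.sqrt 2/2) * Real.sqrt ((1+1/Real.sqrt 3)/2))) ≠ 0 := by
  have := a_pos; have := w_neg; nlinarith

lemma hadd_ne : alph * (starRingEnd ℂ) beta + beta * (starRingEnd ℂ) alph ≠ 0 := by
  rw [c_eq, cbar_eq]
  intro h
  apply aw_ne
  have : (↑(Real.sqrt ((1 - 1/Real.sqrt 3)/2) * (-(Real.sqrt 2/2) * Real.sqrt ((1+1/Real.sqrt 3)/2))) : ℂ) * 2 = 0 := by
    linear_combination h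
  simpa using this

lemma hsub_ne : alph * (starRingEnd ℂ) beta - beta * (starRingEnd ℂ) alph ≠ 0 := by
  rw [c_eq, cbar_eq]
  intro h
  apply aw_ne
  have h2 : (↑(Real.sqrt ((1 - 1/Real.sqrt 3)/2) * (-(Real.sqrt 2/2) * Real.sqrt ((1+1/Real.sqrt 3)/2))) : ℂ) * (2 * Complex.I) = 0 := by
    linear_combination -h
  rcases mul_eq_zero.mp h2 with h3 | h3
  · simpa using h3
  · exfalso; simp [Complex.I_ne_zero] at h3

lemma sum_two {N : ℕ} {z k : Fin N} (hzk : z ≠ k) (f : Fin N → ℂ)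
    (hf : ∀ i, i ≠ z → i ≠ k → f i = 0) : ∑ i, f i = f z + f k := by
  have hsub := Finset.sum_subset (Finset.subset_univ ({z, k} : Finset (Fin N)))
    (fun i _ hi => by
      simp only [Finset.mem_insert, Finset.mem_singleton, not_or] at hi
      exact hf i hi.1 hi.2)
  rw [← hsub, Finset.sum_pair hzk]

lemma trace_outer_psiv {N : ℕ} (m : Fin 4) (n : ℕ) (hn : n + 1 < N)
    (X : Matrix (Fin N) (Fin N) ℂ) :
    Matrix.trace (outer (psiv N m n) (psiv N m n) * X) =
      coef m 0 * (starRingEnd ℂ) (coef m 0) * X ⟨0, by omega⟩ ⟨0, by omega⟩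
      + coef m 0 * (starRingEnd ℂ) (coef m 1) * X ⟨n+1, hn⟩ ⟨0, by omega⟩
      + coef m 1 * (starRingEnd ℂ) (coef m 0) * X ⟨0, by omega⟩ ⟨n+1, hn⟩
      + coef m 1 * (starRingEnd ℂ) (coef m 1) * X ⟨n+1, hn⟩ ⟨n+1, hn⟩ := by
  set z : Fin N := ⟨0, by omega⟩ with hz
  set k : Fin N := ⟨n+1, hn⟩ with hk
  have hzk : z ≠ k := by simp [hz, hk, Fin.ext_iff]
  have hψz : psiv N m n z = coef m 0 := by simp [psiv, hz]
  have hψk : psiv N m n k = coef m 1 := by simp [psiv, hk]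
  have hψ0 : ∀ i : Fin N, i ≠ z → i ≠ k → psiv N m n i = 0 := by
    intro i hiz hik
    simp only [psiv]
    rw [if_neg (fun h => hiz (Fin.ext h)), if_neg (fun h => hik (Fin.ext h))]
  have inner : ∀ i : Fin N,
      (∑ j, psiv N m n i * (starRingEnd ℂ) (psiv N m n j) * X j i)
      = psiv N m n i * (starRingEnd ℂ) (coef m 0) * X z i
        + psiv N m n i * (starRingEnd ℂ) (coef m 1) * X k i := by
    intro i
    rw [sum_two hzk (fun j => psiv N m n i * (starRingEnd ℂ) (psiv N m n j) * X j i)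
      (fun j hjz hjk => by simp [hψ0 j hjz hjk]), hψz, hψk]
  calc Matrix.trace (outer (psiv N m n) (psiv N m n) * X)
      = ∑ i, ∑ j, psiv N m n i * (starRingEnd ℂ) (psiv N m n j) * X j i := by
        simp [Matrix.trace, Matrix.diag, Matrix.mul_apply, outer]
    _ = _ := by
        rw [sum_two hzk
          (fun i => ∑ j, psiv N m n i * (starRingEnd ℂ) (psiv N m n j) * X j i)
          (fun i hiz hik => by simp [hψ0 i hiz hik]), inner z, inner k, hψz, hψk]
        ring

lemma key {N : ℕ} (X : Matrix (Fin N) (Fin N) ℂ) (n : ℕ) (hn : n + 1 < N)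
    (h : ∀ m : Fin 4, Matrix.trace (outer (psiv N m n) (psiv N m n) * X) = 0) :
    X ⟨0, by omega⟩ ⟨0, by omega⟩ = 0 ∧ X ⟨n+1, hn⟩ ⟨n+1, hn⟩ = 0 ∧
    X ⟨0, by omega⟩ ⟨n+1, hn⟩ = 0 ∧ X ⟨n+1, hn⟩ ⟨0, by omega⟩ = 0 := by
  have c00 : coef 0 0 = alph := rfl
  have c01 : coef 0 1 = beta := rfl
  have c10 : coef 1 0 = beta := rfl
  have c11 : coef 1 1 = alph := rfl
  have c20 : coef 2 0 = alph := rfl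
  have c21 : coef 2 1 = -beta := rfl
  have c30 : coef 3 0 = -beta := rfl
  have c31 : coef 3 1 = alph := rfl
  have e0 := h 0; rw [trace_outer_psiv 0 n hn X, c00, c01] at e0
  have e1 := h 1; rw [trace_outer_psiv 1 n hn X, c10, c11] at e1
  have e2 := h 2; rw [trace_outer_psiv 2 n hn X, c20, c21] at e2
  have e3 := h 3; rw [trace_outer_psiv 3 n hn X, c30, c31] at e3
  simp only [map_neg, mul_neg, neg_mul, neg_neg] at e2 e3
  set z : Fin N := ⟨0, by omega⟩
  set k : Fin N := ⟨n+1, hn⟩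
  -- diagonal
  have hd1 : X z z + X k k = 0 := by
    linear_combination (e0 + e1 + e2 + e3) / 2 - (X z z + X k k) * hsum
  have hd2 : (alph * (starRingEnd ℂ) alph - beta * (starRingEnd ℂ) beta) * (X z z - X k k) = 0 := by
    linear_combination (e0 - e1 + e2 - e3) / 2
  have hd2' : X z z - X k k = 0 := by
    rcases mul_eq_zero.mp hd2 with h' | h'
    · exact absurd h' hdiff_ne
    · exact h'
  have hzz : X z z = 0 := by linear_combination (hd1 + hd2') / 2
  have hkk : X k k = 0 := by linear_combination (hd1 - hd2') / 2
  -- off-diagonal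
  have ho1 : (alph * (starRingEnd ℂ) beta + beta * (starRingEnd ℂ) alph) * (X k z + X z k) = 0 := by
    linear_combination (e0 + e1 - e2 - e3) / 2
  have ho2 : (alph * (starRingEnd ℂ) beta - beta * (starRingEnd ℂ) alph) * (X k z - X z k) = 0 := by
    linear_combination (e0 - e1 - e2 + e3) / 2
  have ho1' : X k z + X z k = 0 := by
    rcases mul_eq_zero.mp ho1 with h' | h'
    · exact absurd h' hadd_ne
    · exact h'
  have ho2' : X k z - X z k = 0 := by
    rcases mul_eq_zero.mp ho2 with h' | h'
    · exact absurd h' hsub_ne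
    · exact h'
  have hzk2 : X z k = 0 := by linear_combination (ho1' - ho2') / 2
  have hkz : X k z = 0 := by linear_combination (ho1' + ho2') / 2
  exact ⟨hzz, hkk, hzk2, hkz⟩

/-- Lemma 4 (part Ψ): a Hermitian matrix X lies in the null space of A_Ψ iff its
diagonal entries and its first row vanish. -/
theorem null_space_Psi (N : ℕ) (hN : 2 ≤ N) (X : Matrix (Fin N) (Fin N) ℂ)
    (hX : X.IsHermitian) :
    (∀ (m : Fin 4) (n : ℕ), n + 1 < N →
        Matrix.trace (outer (psiv N m n) (psiv N m n) * X) = 0) ↔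
    ((∀ i : Fin N, X i i = 0) ∧ ∀ i : Fin N, X ⟨0, by omega⟩ i = 0) := by
  constructor
  · intro h
    constructor
    · intro i
      by_cases hi : (i : ℕ) = 0
      · rw [show i = ⟨0, by omega⟩ from Fin.ext hi]
        exact (key X 0 (by omega) (fun m => h m 0 (by omega))).1
      · obtain ⟨n, hn⟩ : ∃ n, (i : ℕ) = n + 1 := ⟨(i : ℕ) - 1, by omega⟩
        have hlt : n + 1 < N := hn ▸ i.isLt
        rw [show i = ⟨n + 1, hlt⟩ from Fin.ext hn]
        exact (key X n hlt (fun m => h m n hlt)).2.1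
    · intro i
      by_cases hi : (i : ℕ) = 0
      · rw [show i = ⟨0, by omega⟩ from Fin.ext hi]
        exact (key X 0 (by omega) (fun m => h m 0 (by omega))).1
      · obtain ⟨n, hn⟩ : ∃ n, (i : ℕ) = n + 1 := ⟨(i : ℕ) - 1, by omega⟩
        have hlt : n + 1 < N := hn ▸ i.isLt
        rw [show i = ⟨n + 1, hlt⟩ from Fin.ext hn]
        exact (key X n hlt (fun m => h m n hlt)).2.2.1
  · rintro ⟨hd, hr⟩ m n hn
    rw [trace_outer_psiv m n hn X]
    have hzz : X ⟨0, by omega⟩ ⟨0, by omega⟩ = 0 := hd _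
    have hkk : X ⟨n+1, hn⟩ ⟨n+1, hn⟩ = 0 := hd _
    have hzk : X ⟨0, by omega⟩ ⟨n+1, hn⟩ = 0 := hr _
    have hkz : X ⟨n+1, hn⟩ ⟨0, by omega⟩ = 0 := by
      have h1 : Xᴴ ⟨n+1, hn⟩ ⟨0, by omega⟩ = X ⟨n+1, hn⟩ ⟨0, by omega⟩ := by rw [hX]
      rw [← h1, Matrix.conjTranspose_apply, hzk, star_zero]
    rw [hzz, hkk, hzk, hkz]
    ring
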